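/- Let R be a root system in a finite-dimensional real inner product space V and let Q ∈ 𝔔(R). Then there exists a linear functional f : V → ℝ with f(α) ∈ ℤ for every α ∈ R and f(α) ≡ 1 (mod 4) for every α ∈ Q, if and only if for every integer h both Q*₍₁,₁₎ ∩ Q*_{2h+1} = ∅ and Q*₍₁,₁₎ ∩ Q*_{4h+2} = ∅. -/

import Mathlib

/-- `R` is a root system in the real inner ℝ product space `V`. -/
def IsRootSystem {V : Type*} [NormedAddCommGroup V] [InnerProductSpace ℝ V]
    (R : Set V) : Prop :=
  R.Finite ∧ (0 : V) ∉ R ∧ Submodule.span ℝ R = ⊤ ∧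
  (∀ α ∈ R, ∀ β ∈ R, ∃ k : ℤ, 2 * (inner ℝ β α : ℝ) / (inner ℝ α α : ℝ) = (k : ℝ)) ∧
  (∀ α ∈ R, ∀ β ∈ R, β - (2 * (inner ℝ β α : ℝ) / (inner ℝ α α : ℝ)) • α ∈ R) ∧
  (∀ α ∈ R, ∀ t : ℝ, t • α ∈ R → t = 1 ∨ t = -1)

/-- `Q ∈ 𝔔(R)`: (i) `Q ∩ (−Q) = ∅` and `α + β ∉ R` for all `α, β ∈ Q`;
(ii) every element of `R` is a ℤ-linear combination of elements of `Q`. -/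
def MemQSet {V : Type*} [AddCommGroup V] (R Q : Set V) : Prop :=
  Q ⊆ R ∧ (∀ α ∈ Q, -α ∉ Q) ∧ (∀ α ∈ Q, ∀ β ∈ Q, α + β ∉ R) ∧
  (∀ γ ∈ R, γ ∈ Submodule.span ℤ Q)

/-- `Q*_h`: roots that are ℤ-linear combinations of elements of `Q` with
coefficient sum `h`. -/
def Qstar {V : Type*} [AddCommGroup V] (R Q : Set V) (h : ℤ) : Set V :=
  {α ∈ R | ∃ k : V →₀ ℤ, ↑k.support ⊆ Q ∧ (k.sum fun β n => n • β) = α ∧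
    (k.sum fun _ n => n) = h}

/-- `Q*₍₁,₁₎`: roots of the form `±(β₁ − β₂)` with `β₁, β₂ ∈ Q`. -/
def Qstar11 {V : Type*} [AddCommGroup V] (R Q : Set V) : Set V :=
  {α ∈ R | ∃ β₁ ∈ Q, ∃ β₂ ∈ Q, α = β₁ - β₂ ∨ α = β₂ - β₁}

section Aux
variable {V : Type*} [NormedAddCommGroup V] [InnerProductSpace ℝ V]

lemma inner_self_pos' {x : V} (hx : x ≠ 0) : (0:ℝ) < inner ℝ x x :=
  lt_of_le_of_ne real_inner_self_nonneg
    (fun h => hx ((inner_self_eq_zero (𝕜 := ℝ)).mp h.symm))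

lemma strict_cs {R : Set V} (hR : IsRootSystem R) {α β : V} (hα : α ∈ R) (hβ : β ∈ R)
    (hne : β ≠ α) (hne' : β ≠ -α) :
    (inner ℝ α β : ℝ)^2 < (inner ℝ α α : ℝ) * (inner ℝ β β : ℝ) := by
  obtain ⟨-, h0, -, -, -, hmult⟩ := hR
  have hα0 : α ≠ 0 := fun h => h0 (h ▸ hα)
  have haa : (0:ℝ) < inner ℝ α α := inner_self_pos' hα0
  set z : V := (inner ℝ α α : ℝ) • β - (inner ℝ α β : ℝ) • α with hz
  have hz0 : z ≠ 0 := by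
    intro h
    have hβeq : β = ((inner ℝ α β : ℝ) / (inner ℝ α α : ℝ)) • α := by
      have : (inner ℝ α α : ℝ) • β = (inner ℝ α β : ℝ) • α := by
        rw [hz] at h; linear_combination (norm := module) h
      rw [div_eq_inv_mul, mul_smul, ← this, inv_smul_smul₀ haa.ne']
    have := hmult α hα ((inner ℝ α β : ℝ) / (inner ℝ α α : ℝ)) (by rw [← hβeq]; exact hβ)
    rcases this with h1 | h1
    · exact hne (by rw [hβeq, h1, one_smul])
    · exact hne' (by rw [hβeq, h1, neg_one_smul])
  have hzz : (0:ℝ) < inner ℝ z z := inner_self_pos' hz0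
  have hexp : (inner ℝ z z : ℝ) =
      (inner ℝ α α : ℝ) * ((inner ℝ α α : ℝ) * (inner ℝ β β : ℝ) - (inner ℝ α β : ℝ)^2) := by
    rw [hz]
    simp only [inner_sub_left, inner_sub_right, real_inner_smul_left, real_inner_smul_right]
    rw [real_inner_comm β α]
    ring
  nlinarith [hzz, haa]

lemma diff_or_sum {R : Set V} (hR : IsRootSystem R) {β γ : V} (hβ : β ∈ R) (hγ : γ ∈ R)
    (hne : β ≠ γ) (hne' : β ≠ -γ) :
    ((0:ℝ) < inner ℝ β γ → (β - γ ∈ R ∨ γ - β ∈ R)) ∧ ((inner ℝ β γ : ℝ) < 0 → β + γ ∈ R) := by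
  obtain ⟨p, hp⟩ := hR.2.2.2.1 γ hγ β hβ
  obtain ⟨q, hq⟩ := hR.2.2.2.1 β hβ γ hγ
  have h0 := hR.2.1
  have hβ0 : β ≠ 0 := fun h => h0 (h ▸ hβ)
  have hγ0 : γ ≠ 0 := fun h => h0 (h ▸ hγ)
  have hbb : (0:ℝ) < inner ℝ β β := inner_self_pos' hβ0
  have hgg : (0:ℝ) < inner ℝ γ γ := inner_self_pos' hγ0
  have hcs : (inner ℝ γ β : ℝ)^2 < (inner ℝ γ γ : ℝ) * (inner ℝ β β : ℝ) :=
    strict_cs hR hγ hβ hne hne'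
  have hcomm : (inner ℝ γ β : ℝ) = (inner ℝ β γ : ℝ) := real_inner_comm β γ
  rw [hcomm] at hcs
  have hpq : (p : ℝ) * (q : ℝ) < 4 := by
    rw [← hp, ← hq, hcomm]
    rw [div_mul_div_comm]
    rw [div_lt_iff₀ (by positivity)]
    nlinarith [hcs]
  have hpqZ : p * q < 4 := by exact_mod_cast hpq
  constructor
  · intro hpos
    have hp1 : 1 ≤ p := by
      have : (0:ℝ) < (p:ℝ) := by rw [← hp]; positivity
      exact_mod_cast this
    have hq1 : 1 ≤ q := by
      have : (0:ℝ) < (q:ℝ) := by rw [← hq, hcomm]; positivity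
      exact_mod_cast this
    have : p = 1 ∨ q = 1 := by
      by_contra hc
      push_neg at hc
      have h2p : 2 ≤ p := by omega
      have h2q : 2 ≤ q := by omega
      nlinarith
    rcases this with h1 | h1
    · left
      have := hR.2.2.2.2.1 γ hγ β hβ
      rw [hp, h1] at this; simpa using this
    · right
      have := hR.2.2.2.2.1 β hβ γ hγ
      rw [hq, h1] at this; simpa using this
  · intro hneg
    have hp1 : p ≤ -1 := by
      have : (p:ℝ) < 0 := by
        rw [← hp]; exact div_neg_of_neg_of_pos (by linarith) hgg
      have : p < 0 := by exact_mod_cast this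
      omega
    have hq1 : q ≤ -1 := by
      have : (q:ℝ) < 0 := by
        rw [← hq, hcomm]; exact div_neg_of_neg_of_pos (by linarith) hbb
      have : q < 0 := by exact_mod_cast this
      omega
    have : p = -1 ∨ q = -1 := by
      by_contra hc
      push_neg at hc
      have h2p : p ≤ -2 := by omega
      have h2q : q ≤ -2 := by omega
      nlinarith
    rcases this with h1 | h1
    · have := hR.2.2.2.2.1 γ hγ β hβ
      rw [hp, h1] at this
      simpa [sub_neg_eq_add] using this
    · have := hR.2.2.2.2.1 β hβ γ hγ
      rw [hq, h1] at this
      have : γ + β ∈ R := by simpa [sub_neg_eq_add] using this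
      rwa [add_comm] at this

end Aux

section Aux2
variable {V : Type*} [NormedAddCommGroup V] [InnerProductSpace ℝ V]

lemma inner_nonneg_of_memQ {R Q : Set V} (hR : IsRootSystem R) (hQ : MemQSet R Q)
    {β γ : V} (hβ : β ∈ Q) (hγ : γ ∈ Q) : (0:ℝ) ≤ inner ℝ β γ := by
  rcases eq_or_ne β γ with rfl | hne
  · exact real_inner_self_nonneg
  have hne' : β ≠ -γ := by
    rintro rfl
    exact hQ.2.1 γ hγ hβ
  by_contra hneg
  push_neg at hneg
  exact hQ.2.2.1 β hβ γ hγ ((diff_or_sum hR (hQ.1 hβ) (hQ.1 hγ) hne hne').2 hneg)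

lemma mem_Qstar_of (R Q : Set V) [Fintype ↥Q] (δ : V) (hδ : δ ∈ R) (k : ↥Q → ℤ)
    (hsum : ∑ β : ↥Q, k β • (β : V) = δ) : δ ∈ Qstar R Q (∑ β : ↥Q, k β) := by
  classical
  refine ⟨hδ, ∑ β : ↥Q, Finsupp.single (β : V) (k β), ?_, ?_, ?_⟩
  · intro x hx
    simp only [Finset.mem_coe] at hx
    obtain ⟨β, -, hβ⟩ := Finsupp.mem_support_finset_sum x hx
    have := Finsupp.support_single_subset hβ
    simp only [Finset.mem_singleton] at this
    exact this ▸ β.2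
  · rw [← Finsupp.sum_finsetSum_index (fun a => zero_smul ℤ a) (fun a n m => add_smul n m a)]
    rw [← hsum]
    refine Finset.sum_congr rfl fun β _ => ?_
    rw [Finsupp.sum_single_index (zero_smul ℤ (β:V))]
  · rw [← Finsupp.sum_finsetSum_index (h_zero := fun _ => rfl) (h_add := fun _ _ _ => rfl)]
    refine Finset.sum_congr rfl fun β _ => ?_
    rw [Finsupp.sum_single_index rfl]

lemma claimC {R Q : Set V} (hR : IsRootSystem R) (hQ : MemQSet R Q) [Fintype ↥Q]
    (H : ∀ h : ℤ, Qstar11 R Q ∩ Qstar R Q (2 * h + 1) = ∅ ∧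
       Qstar11 R Q ∩ Qstar R Q (4 * h + 2) = ∅)
    (k : ↥Q → ℤ) (hk : ∑ β : ↥Q, k β • (β : V) = 0) : (4:ℤ) ∣ ∑ β : ↥Q, k β := by
  classical
  by_contra h4
  have hterm : ∃ b b' : ↥Q, b ≠ b' ∧ (k b : ℝ) * (k b' : ℝ) * (inner ℝ (b:V) (b':V) : ℝ) < 0 := by
    by_contra hno
    push_neg at hno
    have hzero : ∑ b : ↥Q, ∑ b' : ↥Q, (k b : ℝ) * (k b' : ℝ) * (inner ℝ (b:V) (b':V) : ℝ) = 0 := by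
      have h00 : (inner ℝ (∑ β : ↥Q, k β • (β : V)) (∑ β : ↥Q, k β • (β : V)) : ℝ) = 0 := by
        rw [hk, inner_zero_left]
      rw [sum_inner] at h00
      rw [← h00]
      refine Finset.sum_congr rfl fun b _ => ?_
      rw [inner_sum]
      refine Finset.sum_congr rfl fun b' _ => ?_
      rw [← Int.cast_smul_eq_zsmul ℝ, ← Int.cast_smul_eq_zsmul ℝ (k b'),
        real_inner_smul_left, real_inner_smul_right]
      ring
    have hnn : ∀ b : ↥Q, ∀ b' : ↥Q,
        (0:ℝ) ≤ (k b : ℝ) * (k b' : ℝ) * (inner ℝ (b:V) (b':V) : ℝ) := by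
      intro b b'
      rcases eq_or_ne b b' with rfl | hne
      · exact mul_nonneg (mul_self_nonneg _) real_inner_self_nonneg
      · exact hno b b' hne
    have hinner0 : ∀ b : ↥Q, ∑ b' : ↥Q,
        (k b : ℝ) * (k b' : ℝ) * (inner ℝ (b:V) (b':V) : ℝ) = 0 := by
      have := (Finset.sum_eq_zero_iff_of_nonneg
        (fun b _ => Finset.sum_nonneg fun b' _ => hnn b b')).mp hzero
      exact fun b => this b (Finset.mem_univ b)
    have hk0 : ∀ b : ↥Q, k b = 0 := by
      intro b
      have := (Finset.sum_eq_zero_iff_of_nonneg (fun b' _ => hnn b b')).mp (hinner0 b) b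
        (Finset.mem_univ b)
      have hb0 : ((b:V)) ≠ 0 := fun h => hR.2.1 (h ▸ hQ.1 b.2)
      have hbb : (0:ℝ) < inner ℝ (b:V) (b:V) := inner_self_pos' hb0
      rcases mul_eq_zero.mp this with h' | h'
      · have : (k b : ℝ) = 0 := by
          rcases mul_eq_zero.mp h' with h'' | h'' <;> exact h''
        exact_mod_cast this
      · exact absurd h' hbb.ne'
    exact h4 (by simp [hk0])
  obtain ⟨b, b', hne, hlt⟩ := hterm
  have hb0 : (0:ℝ) ≤ inner ℝ (b:V) (b':V) := inner_nonneg_of_memQ hR hQ b.2 b'.2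
  have hpos : (0:ℝ) < inner ℝ (b:V) (b':V) := by
    rcases hb0.lt_or_eq with h | h
    · exact h
    · exfalso; rw [← h] at hlt; simp at hlt
  have hneV : (b:V) ≠ (b':V) := fun h => hne (Subtype.coe_injective h)
  have hneV' : (b:V) ≠ -(b':V) := by
    intro h
    exact hQ.2.1 (b':V) b'.2 (h ▸ b.2)
  have hdiff := (diff_or_sum hR (hQ.1 b.2) (hQ.1 b'.2) hneV hneV').1 hpos
  -- choose (b₁, b₂) with ↑b₁ - ↑b₂ ∈ R
  obtain ⟨b₁, b₂, hδR, hne12⟩ :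
      ∃ b₁ b₂ : ↥Q, (b₁:V) - (b₂:V) ∈ R ∧ b₁ ≠ b₂ := by
    rcases hdiff with h | h
    · exact ⟨b, b', h, hne⟩
    · exact ⟨b', b, h, hne.symm⟩
  set δ : V := (b₁:V) - (b₂:V) with hδ
  have h11 : δ ∈ Qstar11 R Q := ⟨hδR, b₁, b₁.2, b₂, b₂.2, Or.inl rfl⟩
  set k' : ↥Q → ℤ := fun γ => k γ + (if γ = b₁ then 1 else 0) - (if γ = b₂ then 1 else 0)
    with hk'
  have hsum' : ∑ γ : ↥Q, k' γ • (γ : V) = δ := by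
    simp only [hk', sub_smul, add_smul, ite_smul, one_smul, zero_smul]
    rw [Finset.sum_sub_distrib, Finset.sum_add_distrib]
    simp [hk, Finset.sum_ite_eq', hδ]
  have hks : ∑ γ : ↥Q, k' γ = ∑ γ : ↥Q, k γ := by
    simp only [hk']
    rw [Finset.sum_sub_distrib, Finset.sum_add_distrib]
    simp [Finset.sum_ite_eq']
  have hmem : δ ∈ Qstar R Q (∑ γ : ↥Q, k γ) := by
    have := mem_Qstar_of R Q δ hδR k' hsum'
    rwa [hks] at this
  set s : ℤ := ∑ γ : ↥Q, k γ with hs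
  have hmod : s % 4 = 1 ∨ s % 4 = 2 ∨ s % 4 = 3 := by omega
  rcases hmod with h1 | h2 | h3
  · have heq : s = 2 * (s / 2) + 1 := by omega
    rw [heq] at hmem
    exact Set.eq_empty_iff_forall_notMem.mp (H (s / 2)).1 δ ⟨h11, hmem⟩
  · have heq : s = 4 * (s / 4) + 2 := by omega
    rw [heq] at hmem
    exact Set.eq_empty_iff_forall_notMem.mp (H (s / 4)).2 δ ⟨h11, hmem⟩
  · have heq : s = 2 * (s / 2) + 1 := by omega
    rw [heq] at hmem
    exact Set.eq_empty_iff_forall_notMem.mp (H (s / 2)).1 δ ⟨h11, hmem⟩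
end Aux2

section Aux3
variable {V : Type*} [NormedAddCommGroup V] [InnerProductSpace ℝ V]

lemma f_sum_int (f : V →ₗ[ℝ] ℝ) (K : V →₀ ℤ) (g : V → ℤ)
    (hg : ∀ x ∈ K.support, f x = (g x : ℝ)) :
    f (K.sum fun mi n => n • mi) = ((K.sum fun mi n => n * g mi : ℤ) : ℝ) := by
  rw [map_finsuppSum]
  simp only [Finsupp.sum]
  rw [Int.cast_sum]
  refine Finset.sum_congr rfl fun x hx => ?_
  rw [map_zsmul, zsmul_eq_mul, hg x hx]
  push_cast
  ring

lemma forward_dir {R Q : Set V} (f : V →ₗ[ℝ] ℝ)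
    (hf1 : ∀ α ∈ R, ∃ m : ℤ, f α = (m : ℝ))
    (hf2 : ∀ α ∈ Q, ∃ m : ℤ, f α = ((4 * m + 1 : ℤ) : ℝ)) (s : ℤ) (hs : ¬ (4 ∣ s)) :
    Qstar11 R Q ∩ Qstar R Q s = ∅ := by
  classical
  rw [Set.eq_empty_iff_forall_notMem]
  rintro α ⟨⟨hαR, β₁, hβ₁, β₂, hβ₂, hor⟩, ⟨-, K, hKsupp, hKsum, hKcount⟩⟩
  have hm : ∀ β, ∃ m : ℤ, β ∈ Q → f β = ((4 * m + 1 : ℤ) : ℝ) := by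
    intro β
    by_cases hβ : β ∈ Q
    · obtain ⟨m, hm⟩ := hf2 β hβ
      exact ⟨m, fun _ => hm⟩
    · exact ⟨0, fun h => absurd h hβ⟩
  choose m hm using hm
  -- first computation : f α is divisible by 4
  have h1 : ∃ M : ℤ, f α = ((4 * M : ℤ) : ℝ) := by
    rcases hor with rfl | rfl
    · refine ⟨m β₁ - m β₂, ?_⟩
      rw [map_sub, hm β₁ hβ₁, hm β₂ hβ₂]
      push_cast; ring
    · refine ⟨m β₂ - m β₁, ?_⟩
      rw [map_sub, hm β₂ hβ₂, hm β₁ hβ₁]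
      push_cast; ring
  -- second computation : f α ≡ s mod 4
  have h2 : ∃ N : ℤ, f α = ((4 * N + s : ℤ) : ℝ) := by
    refine ⟨K.sum fun β n => n * m β, ?_⟩
    have := f_sum_int f K (fun β => 4 * m β + 1)
      (fun x hx => hm x (hKsupp hx))
    rw [hKsum] at this
    rw [this]
    congr 1
    simp only [Finsupp.sum] at hKcount ⊢
    rw [← hKcount, Finset.mul_sum, ← Finset.sum_add_distrib]
    refine Finset.sum_congr rfl fun x _ => by ring
  obtain ⟨M, hM⟩ := h1
  obtain ⟨N, hN⟩ := h2
  rw [hM] at hN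
  have : 4 * M = 4 * N + s := by exact_mod_cast hN
  omega

end Aux3

section Aux4
variable {V : Type*} [NormedAddCommGroup V] [InnerProductSpace ℝ V]

lemma backward_dir [FiniteDimensional ℝ V] {R Q : Set V}
    (hR : IsRootSystem R) (hQ : MemQSet R Q)
    (H : ∀ h : ℤ, Qstar11 R Q ∩ Qstar R Q (2 * h + 1) = ∅ ∧
       Qstar11 R Q ∩ Qstar R Q (4 * h + 2) = ∅) :
    ∃ f : V →ₗ[ℝ] ℝ, (∀ α ∈ R, ∃ m : ℤ, f α = (m : ℝ)) ∧
       (∀ α ∈ Q, ∃ m : ℤ, f α = ((4 * m + 1 : ℤ) : ℝ)) := by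
  classical
  have hQfin : Q.Finite := hR.1.subset hQ.1
  haveI : Fintype ↥Q := hQfin.fintype
  obtain ⟨B, hBR, hBspan, hBind⟩ := exists_linearIndependent ℝ R
  have hBfin : B.Finite := hR.1.subset hBR
  haveI : Fintype ↥B := hBfin.fintype
  have hBtop : Submodule.span ℝ B = ⊤ := by rw [hBspan, hR.2.2.1]
  -- the coroot coordinate map
  set Φ : V →ₗ[ℝ] (↥B → ℝ) :=
    { toFun := fun v b => 2 * (inner ℝ v (b:V) : ℝ) / (inner ℝ (b:V) (b:V) : ℝ)
      map_add' := by
        intro x y; funext b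
        simp only [inner_add_left, Pi.add_apply]
        ring
      map_smul' := by
        intro t x; funext b
        simp only [real_inner_smul_left, RingHom.id_apply, Pi.smul_apply, smul_eq_mul]
        ring } with hΦdef
  have hΦapp : ∀ (v : V) (b : ↥B), Φ v b = 2 * (inner ℝ v (b:V) : ℝ) / (inner ℝ (b:V) (b:V) : ℝ) :=
    fun v b => rfl
  have hwex : ∀ (β : ↥Q) (b : ↥B), ∃ z : ℤ, Φ (β:V) b = (z:ℝ) := by
    intro β b
    obtain ⟨z, hz⟩ := hR.2.2.2.1 (b:V) (hBR b.2) (β:V) (hQ.1 β.2)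
    exact ⟨z, by rw [hΦapp]; exact hz⟩
  choose w hw using hwex
  have hΦinj : ∀ v : V, Φ v = 0 → v = 0 := by
    intro v hv
    have hperp : ∀ u ∈ Submodule.span ℝ B, (inner ℝ v u : ℝ) = 0 := by
      intro u hu
      induction hu using Submodule.span_induction with
      | mem x hx =>
          have hx0 : x ≠ 0 := fun h => hR.2.1 (h ▸ hBR hx)
          have hcf := congrFun hv ⟨x, hx⟩
          rw [hΦapp, Pi.zero_apply] at hcf
          have hxx : (inner ℝ x x : ℝ) ≠ 0 := (inner_self_pos' hx0).ne'
          field_simp at hcf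
          linarith
      | zero => exact inner_zero_right v
      | add x y _ _ hx hy => rw [inner_add_right, hx, hy, add_zero]
      | smul c x _ hx => rw [real_inner_smul_right, hx, mul_zero]
    have hvv : (inner ℝ v v : ℝ) = 0 := hperp v (hBtop ▸ Submodule.mem_top)
    exact (inner_self_eq_zero (𝕜 := ℝ)).mp hvv
  -- the lattice downstairs
  set M : Submodule ℤ (↥B → ℤ) := Submodule.span ℤ (Set.range w) with hM
  obtain ⟨nk, bb⟩ := Submodule.basisOfPid (Pi.basisFun ℤ ↥B) M
  have hrex : ∀ i : Fin nk, ∃ r : ↥Q → ℤ, ∑ β : ↥Q, r β • w β = (bb i : ↥B → ℤ) := by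
    intro i
    exact (Submodule.mem_span_range_iff_exists_fun ℤ).mp (bb i).2
  choose r hr using hrex
  set d : Fin nk → ℤ := fun i => ∑ β : ↥Q, r i β with hd
  have hwM : ∀ β : ↥Q, w β ∈ M := fun β => Submodule.subset_span (Set.mem_range_self β)
  set a : ↥Q → Fin nk → ℤ := fun β i => bb.repr ⟨w β, hwM β⟩ i with ha
  have harep : ∀ β : ↥Q, ∑ i, a β i • (bb i : ↥B → ℤ) = w β := by
    intro β
    have hb := bb.sum_repr ⟨w β, hwM β⟩
    have h2 := congrArg (M.subtype) hb
    rw [map_sum] at h2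
    simpa only [map_smul, Submodule.subtype_apply] using h2
  have hkey : ∀ β : ↥Q, w β = ∑ γ : ↥Q, (∑ i, a β i * r i γ) • w γ := by
    intro β
    rw [← harep β]
    have hterm : ∀ i : Fin nk, a β i • (bb i : ↥B → ℤ) = ∑ γ : ↥Q, (a β i * r i γ) • w γ := by
      intro i
      rw [← hr i, Finset.smul_sum]
      refine Finset.sum_congr rfl fun γ _ => ?_
      rw [smul_smul]
    rw [Finset.sum_congr rfl (fun i _ => hterm i), Finset.sum_comm]
    refine Finset.sum_congr rfl fun γ _ => ?_
    rw [← Finset.sum_smul]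
  -- lifting relations upstairs
  have hlift : ∀ mm : ↥Q → ℤ, ∑ γ : ↥Q, mm γ • w γ = 0 → ∑ γ : ↥Q, mm γ • (γ:V) = 0 := by
    intro mm hmm
    apply hΦinj
    funext b
    have h0 : ∑ γ : ↥Q, mm γ * w γ b = 0 := by
      have := congrFun hmm b
      simpa [Finset.sum_apply, Pi.smul_apply, smul_eq_mul] using this
    have h0R : ∑ γ : ↥Q, (mm γ : ℝ) * (w γ b : ℝ) = 0 := by
      have h0' : ((∑ γ : ↥Q, mm γ * w γ b : ℤ) : ℝ) = 0 := by rw [h0]; simp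
      rw [Int.cast_sum] at h0'
      push_cast at h0'
      exact h0'
    have h1 : Φ (∑ γ : ↥Q, mm γ • (γ:V)) b = ∑ γ : ↥Q, (mm γ : ℝ) * (w γ b : ℝ) := by
      rw [map_sum, Finset.sum_apply]
      refine Finset.sum_congr rfl fun γ _ => ?_
      rw [map_zsmul, Pi.smul_apply, ← hw γ b, zsmul_eq_mul]
    rw [h1, h0R]
    simp
  -- the key congruence
  have ht : ∀ β : ↥Q, (4:ℤ) ∣ (∑ i, a β i * d i) - 1 := by
    intro β
    have hrel0 : ∑ γ : ↥Q, ((∑ i, a β i * r i γ) - (if γ = β then 1 else 0)) • w γ = 0 := by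
      simp only [sub_smul, ite_smul, one_smul, zero_smul]
      rw [Finset.sum_sub_distrib, ← hkey β]
      simp [Finset.sum_ite_eq']
    have hdvd := claimC hR hQ H _ (hlift _ hrel0)
    have hsum : ∑ γ : ↥Q, ((∑ i, a β i * r i γ) - (if γ = β then 1 else 0))
        = (∑ i, a β i * d i) - 1 := by
      rw [Finset.sum_sub_distrib]
      congr 1
      · rw [Finset.sum_comm]
        refine Finset.sum_congr rfl fun i _ => ?_
        rw [hd, ← Finset.mul_sum]
      · simp [Finset.sum_ite_eq']
    rwa [hsum] at hdvd
  -- cast map to ℚ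
  set c2 : (↥B → ℤ) →ₗ[ℤ] (↥B → ℚ) :=
    { toFun := fun x b => (x b : ℚ)
      map_add' := by intro x y; funext b; simp
      map_smul' := by
        intro z x; funext b
        simp [Pi.smul_apply, smul_eq_mul] } with hc2
  have hc2app : ∀ (x : ↥B → ℤ) (b : ↥B), c2 x b = (x b : ℚ) := fun x b => rfl
  have hc2inj : Function.Injective c2 := by
    intro x y hxy
    funext b
    have := congrFun hxy b
    rw [hc2app, hc2app] at this
    exact_mod_cast this
  have hbbind : LinearIndependent ℤ (fun i : Fin nk => (bb i : ↥B → ℤ)) :=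
    bb.linearIndependent.map' M.subtype (Submodule.ker_subtype M)
  set u : Fin nk → (↥B → ℚ) := fun i => c2 (bb i : ↥B → ℤ) with hu
  have huind : LinearIndependent ℤ u :=
    hbbind.map' c2 (LinearMap.ker_eq_bot.mpr hc2inj)
  have huindQ : LinearIndependent ℚ u :=
    (LinearIndependent.iff_fractionRing ℤ ℚ).mp huind
  set bu : Module.Basis (Fin nk) ℚ (Submodule.span ℚ (Set.range u)) := Module.Basis.span huindQ with hbu
  set ψ0 : Submodule.span ℚ (Set.range u) →ₗ[ℚ] ℚ := bu.constr ℚ (fun i => (d i : ℚ)) with hψ0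
  obtain ⟨ψ, hψ⟩ := LinearMap.exists_extend ψ0
  have hψu : ∀ i, ψ (u i) = (d i : ℚ) := by
    intro i
    have hmem : u i ∈ Submodule.span ℚ (Set.range u) :=
      Submodule.subset_span (Set.mem_range_self i)
    have h1 : (⟨u i, hmem⟩ : Submodule.span ℚ (Set.range u)) = bu i := by
      apply Subtype.ext
      rw [hbu, Module.Basis.span_apply]
    have h2 : ψ (u i) = ψ0 ⟨u i, hmem⟩ := by
      rw [← hψ]
      rfl
    rw [h2, h1, hψ0, Module.Basis.constr_basis]
  have hψw : ∀ β : ↥Q, ψ (c2 (w β)) = ((∑ i, a β i * d i : ℤ) : ℚ) := by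
    intro β
    have h1 : ψ (c2 (w β)) = ∑ i, (a β i : ℚ) * (d i : ℚ) := by
      rw [← harep β, map_sum, map_sum]
      refine Finset.sum_congr rfl fun i _ => ?_
      rw [map_zsmul, map_zsmul, hψu i, zsmul_eq_mul]
    rw [h1, Int.cast_sum]
    refine Finset.sum_congr rfl fun i _ => ?_
    push_cast
    ring
  -- the coefficient vector and final functional
  set c : ↥B → ℚ := fun b => ψ (Pi.single b 1) with hcc
  have hψc : ∀ x : ↥B → ℤ, ψ (c2 x) = ∑ b : ↥B, (x b : ℚ) * c b := by
    intro x
    have hxdec : c2 x = ∑ b : ↥B, (x b : ℚ) • (Pi.single b 1 : ↥B → ℚ) := by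
      funext b'
      rw [Finset.sum_apply, hc2app]
      have hone : ∀ b : ↥B, ((x b : ℚ) • (Pi.single b 1 : ↥B → ℚ)) b'
          = if b' = b then (x b : ℚ) else 0 := by
        intro b
        rw [Pi.smul_apply, smul_eq_mul, Pi.single_apply]
        split <;> simp
      rw [Finset.sum_congr rfl fun b _ => hone b, Finset.sum_ite_eq Finset.univ b' _]
      simp
    rw [hxdec, map_sum]
    refine Finset.sum_congr rfl fun b _ => ?_
    rw [map_smul, smul_eq_mul, hcc]
  set F : (↥B → ℝ) →ₗ[ℝ] ℝ :=
    { toFun := fun x => ∑ b : ↥B, x b * (c b : ℝ)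
      map_add' := by
        intro x y
        simp only [Pi.add_apply, add_mul]
        rw [Finset.sum_add_distrib]
      map_smul' := by
        intro t x
        simp only [Pi.smul_apply, smul_eq_mul, RingHom.id_apply, Finset.mul_sum, mul_assoc] } with hF
  have hFapp : ∀ x : ↥B → ℝ, F x = ∑ b : ↥B, x b * (c b : ℝ) := fun x => rfl
  have hFint : ∀ x : ↥B → ℤ, F (fun b => (x b : ℝ)) = ((ψ (c2 x) : ℚ) : ℝ) := by
    intro x
    rw [hFapp, hψc, Rat.cast_sum]
    refine Finset.sum_congr rfl fun b _ => ?_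
    push_cast
    ring
  refine ⟨F.comp Φ, ?_, ?_⟩
  · -- integrality on R
    intro α hα
    obtain ⟨K, hKsupp, hKsum⟩ := Submodule.mem_span_set.mp (hQ.2.2.2 α hα)
    have hQint : ∀ x, ∃ m : ℤ, x ∈ Q → (F.comp Φ) x = (m : ℝ) := by
      intro x
      by_cases hx : x ∈ Q
      · refine ⟨∑ i, a ⟨x, hx⟩ i * d i, fun _ => ?_⟩
        have hΦβ : Φ x = fun b => ((w ⟨x, hx⟩ b : ℤ) : ℝ) := by
          funext b
          exact hw ⟨x, hx⟩ b
        rw [LinearMap.comp_apply]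
        show F (Φ x) = _
        rw [hΦβ, hFint, hψw ⟨x, hx⟩]
        norm_cast
      · exact ⟨0, fun h => absurd h hx⟩
    choose g hg using hQint
    refine ⟨K.sum fun mi n => n * g mi, ?_⟩
    rw [← hKsum]
    exact f_sum_int (F.comp Φ) K g (fun x hx => hg x (hKsupp hx))
  · intro α hα
    set β : ↥Q := ⟨α, hα⟩ with hβ
    have hΦβ : Φ (β:V) = fun b => ((w β b : ℤ) : ℝ) := by
      funext b
      exact hw β b
    have hval : (F.comp Φ) α = ((∑ i, a β i * d i : ℤ) : ℝ) := by
      rw [LinearMap.comp_apply]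
      show F (Φ (β:V)) = _
      rw [hΦβ, hFint, hψw β]
      norm_cast
    obtain ⟨mq, hmq⟩ := ht β
    refine ⟨(∑ i, a β i * d i - 1) / 4, ?_⟩
    rw [hval]
    congr 1
    omega
end Aux4


/-- Criterion for the weak-J-property of the CR algebra of the complete flag
determined by `Q`: there is a linear functional integral on `R` and `≡ 1 mod 4`
on `Q` iff `Q*₍₁,₁₎ ∩ Q*_{2h+1} = ∅` and `Q*₍₁,₁₎ ∩ Q*_{4h+2} = ∅` for all `h`. -/
theorem stmt_11 {V : Type*} [NormedAddCommGroup V] [InnerProductSpace ℝ V]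
    [FiniteDimensional ℝ V]
    (R : Set V) (hR : IsRootSystem R) (Q : Set V) (hQ : MemQSet R Q) :
    (∃ f : V →ₗ[ℝ] ℝ, (∀ α ∈ R, ∃ m : ℤ, f α = (m : ℝ)) ∧
       (∀ α ∈ Q, ∃ m : ℤ, f α = ((4 * m + 1 : ℤ) : ℝ))) ↔
    (∀ h : ℤ, Qstar11 R Q ∩ Qstar R Q (2 * h + 1) = ∅ ∧
       Qstar11 R Q ∩ Qstar R Q (4 * h + 2) = ∅) := by
  constructor
  · rintro ⟨f, hf1, hf2⟩ h
    exact ⟨forward_dir f hf1 hf2 _ (by omega), forward_dir f hf1 hf2 _ (by omega)⟩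
  · intro H
    exact backward_dir hR hQ H
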